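/- With p = ‖y‖²‖s‖²/(s^T y)² and γ = τ‖s‖²/(s^T y), the smallest nontrivial eigenvalue of H̄ equals λ_min = (p + γ - √((p+γ)² - 4γ))/2, and λ_min > 0 whenever τ > 0 and s^T y > 0. -/

import Mathlib

open Matrix

lemma vecMulVec_mulVec' {n : ℕ} (a b v : Fin n → ℝ) :
    vecMulVec a b *ᵥ v = (b ⬝ᵥ v) • a := by
  ext i
  simp only [vecMulVec, mulVec, dotProduct, Pi.smul_apply, smul_eq_mul, of_apply]
  rw [Finset.sum_mul]
  exact Finset.sum_congr rfl fun x _ => by ring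

/-- with `p = ‖y‖²‖s‖²/(sᵀy)²` and `γ = τ‖s‖²/(sᵀy)`, the smallest
eigenvalue of `H̄` is `(p + γ - √((p+γ)² - 4γ))/2`, and it is positive. -/
theorem stmt_5 {n : ℕ} (s y : Fin n → ℝ) (τ : ℝ)
    (hsy : 0 < s ⬝ᵥ y) (hτ : 0 < τ)
    (hind : LinearIndependent ℝ ![s, y]) :
    let Hbar : Matrix (Fin n) (Fin n) ℝ :=
      1 - (s ⬝ᵥ y)⁻¹ • (vecMulVec s y + vecMulVec y s) +
        ((s ⬝ᵥ y)⁻¹ * (τ + (y ⬝ᵥ y) / (s ⬝ᵥ y))) • vecMulVec s s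
    let p : ℝ := (y ⬝ᵥ y) * (s ⬝ᵥ s) / (s ⬝ᵥ y) ^ 2
    let γ : ℝ := τ * (s ⬝ᵥ s) / (s ⬝ᵥ y)
    let lmin : ℝ := (p + γ - Real.sqrt ((p + γ) ^ 2 - 4 * γ)) / 2
    lmin ∈ spectrum ℝ Hbar ∧ (∀ μ ∈ spectrum ℝ Hbar, lmin ≤ μ) ∧ 0 < lmin := by
  intro Hbar p γ lmin
  have hpair := LinearIndependent.pair_iff.mp hind
  set d : ℝ := s ⬝ᵥ y with hd
  have hd0 : d ≠ 0 := ne_of_gt hsy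
  set c : ℝ := d⁻¹ * (τ + (y ⬝ᵥ y) / d) with hc
  -- s ≠ 0 hence s ⬝ᵥ s > 0
  have hs0 : s ≠ 0 := by
    rintro rfl
    simpa using (hpair 1 0 (by simp)).1
  have hss : 0 < s ⬝ᵥ s := by
    have hnn : 0 ≤ s ⬝ᵥ s := Finset.sum_nonneg fun i _ => mul_self_nonneg _
    rcases hnn.lt_or_eq with h | h
    · exact h
    · exact absurd ((dotProduct_self_eq_zero).mp h.symm) hs0
  -- Cauchy–Schwarz : p ≥ 1
  have hcs : d ^ 2 ≤ (s ⬝ᵥ s) * (y ⬝ᵥ y) := by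
    have := Finset.sum_mul_sq_le_sq_mul_sq Finset.univ s y
    simpa [hd, dotProduct, sq] using this
  have hp1 : 1 ≤ p := by
    rw [show p = (y ⬝ᵥ y) * (s ⬝ᵥ s) / d ^ 2 from rfl, le_div_iff₀ (by positivity)]
    linarith [hcs]
  have hγ : 0 < γ := by
    have : 0 < τ * (s ⬝ᵥ s) / d := by positivity
    exact this
  have hT : 0 < p + γ := by linarith
  have hdisc : 0 ≤ (p + γ) ^ 2 - 4 * γ := by nlinarith [sq_nonneg (p - γ)]
  have hsq : Real.sqrt ((p + γ) ^ 2 - 4 * γ) ^ 2 = (p + γ) ^ 2 - 4 * γ :=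
    Real.sq_sqrt hdisc
  -- the quadratic equation satisfied by lmin
  have hquad : lmin ^ 2 - (p + γ) * lmin + γ = 0 := by
    have h : lmin = (p + γ - Real.sqrt ((p + γ) ^ 2 - 4 * γ)) / 2 := rfl
    rw [h]
    linear_combination hsq / 4
  have hlpos : 0 < lmin := by
    have h1 : Real.sqrt ((p + γ) ^ 2 - 4 * γ) < p + γ :=
      (Real.sqrt_lt' hT).mpr (by nlinarith)
    have : 0 < (p + γ - Real.sqrt ((p + γ) ^ 2 - 4 * γ)) / 2 := by linarith
    exact this
  have hlle1 : lmin ≤ 1 := by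
    have h2 : p + γ - 2 ≤ Real.sqrt ((p + γ) ^ 2 - 4 * γ) := by
      rcases le_or_gt (p + γ - 2) 0 with h | h
      · exact h.trans (Real.sqrt_nonneg _)
      · exact (Real.le_sqrt h.le hdisc).mpr (by nlinarith)
    have : (p + γ - Real.sqrt ((p + γ) ^ 2 - 4 * γ)) / 2 ≤ 1 := by linarith
    exact this
  have hg : d⁻¹ * (s ⬝ᵥ s) * τ = γ := by
    have : γ = τ * (s ⬝ᵥ s) / d := rfl
    rw [this]; field_simp
  -- action of Hbar on vectors
  have hmul : ∀ v : Fin n → ℝ, Hbar *ᵥ v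
      = v - (d⁻¹ * (y ⬝ᵥ v)) • s - (d⁻¹ * (s ⬝ᵥ v)) • y + (c * (s ⬝ᵥ v)) • s := by
    intro v
    show (1 - d⁻¹ • (vecMulVec s y + vecMulVec y s) + c • vecMulVec s s) *ᵥ v = _
    rw [add_mulVec, sub_mulVec, one_mulVec, smul_mulVec, smul_mulVec,
      add_mulVec, vecMulVec_mulVec', vecMulVec_mulVec', vecMulVec_mulVec']
    module
  have hHs : Hbar *ᵥ s = (c * (s ⬝ᵥ s)) • s + (-(d⁻¹ * (s ⬝ᵥ s))) • y := by
    rw [hmul s]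
    have hys : y ⬝ᵥ s = d := dotProduct_comm y s
    rw [hys]
    have h1 : d⁻¹ * d = 1 := inv_mul_cancel₀ hd0
    rw [h1]
    module
  have hHy : Hbar *ᵥ y = τ • s := by
    rw [hmul y]
    have hsy' : s ⬝ᵥ y = d := rfl
    rw [hsy']
    have h1 : d⁻¹ * d = 1 := inv_mul_cancel₀ hd0
    rw [h1]
    have h2 : c * d = τ + d⁻¹ * (y ⬝ᵥ y) := by
      rw [hc]; field_simp
    rw [h2]
    module
  have hcss : c * (s ⬝ᵥ s) = p + γ := by
    rw [hc]
    show d⁻¹ * (τ + (y ⬝ᵥ y) / d) * (s ⬝ᵥ s)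
      = (y ⬝ᵥ y) * (s ⬝ᵥ s) / d ^ 2 + τ * (s ⬝ᵥ s) / d
    field_simp
    ring
  -- action on combinations
  have hcomb : ∀ a b : ℝ, Hbar *ᵥ (a • s + b • y)
      = (a * (p + γ) + b * τ) • s + (-(a * (d⁻¹ * (s ⬝ᵥ s)))) • y := by
    intro a b
    rw [mulVec_add, mulVec_smul, mulVec_smul, hHs, hHy, hcss]
    module
  -- spectrum ↔ eigenvalue
  have hspec : ∀ μ : ℝ, μ ∈ spectrum ℝ Hbar ↔
      ∃ x : Fin n → ℝ, x ≠ 0 ∧ Hbar *ᵥ x = μ • x := by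
    intro μ
    rw [← AlgEquiv.spectrum_eq (Matrix.toLinAlgEquiv' (R := ℝ) (n := Fin n)) Hbar,
      ← Module.End.hasEigenvalue_iff_mem_spectrum]
    constructor
    · intro h
      obtain ⟨v, hv⟩ := h.exists_hasEigenvector
      refine ⟨v, hv.2, ?_⟩
      have := Module.End.mem_eigenspace_iff.mp hv.1
      rwa [Matrix.toLinAlgEquiv'_apply] at this
    · rintro ⟨x, hx0, hx⟩
      exact Module.End.hasEigenvalue_of_hasEigenvector
        ⟨Module.End.mem_eigenspace_iff.mpr (by rwa [Matrix.toLinAlgEquiv'_apply]), hx0⟩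
  refine ⟨?_, ?_, hlpos⟩
  · -- lmin is an eigenvalue
    rw [hspec]
    refine ⟨lmin • s + (-(d⁻¹ * (s ⬝ᵥ s))) • y, ?_, ?_⟩
    · intro h
      have h2 := (hpair _ _ h).2
      have hne : d⁻¹ * (s ⬝ᵥ s) ≠ 0 := by positivity
      exact hne (neg_eq_zero.mp h2)
    · rw [hcomb]
      have h1 : lmin * (p + γ) + (-(d⁻¹ * (s ⬝ᵥ s))) * τ = lmin * lmin := by
        linear_combination -hquad - hg
      rw [h1]
      module
  · -- lmin is the smallest
    intro μ hμ
    obtain ⟨x, hx0, hx⟩ := (hspec μ).mp hμ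
    rcases eq_or_ne μ 1 with rfl | hμ1
    · exact hlle1
    have hmx := hmul x
    rw [hx] at hmx
    have hne : μ - 1 ≠ 0 := sub_ne_zero.mpr hμ1
    have hstep : (μ - 1) • x
        = (-(d⁻¹ * (y ⬝ᵥ x)) + c * (s ⬝ᵥ x)) • s + (-(d⁻¹ * (s ⬝ᵥ x))) • y := by
      linear_combination (norm := module) hmx
    set a : ℝ := (μ - 1)⁻¹ * (-(d⁻¹ * (y ⬝ᵥ x)) + c * (s ⬝ᵥ x)) with ha
    set b : ℝ := (μ - 1)⁻¹ * (-(d⁻¹ * (s ⬝ᵥ x))) with hb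
    have hxab : x = a • s + b • y := by
      have h3 := congrArg (fun v => (μ - 1)⁻¹ • v) hstep
      simp only [smul_add, smul_smul] at h3
      rwa [inv_mul_cancel₀ hne, one_smul] at h3
    rw [hxab, hcomb] at hx
    have hzero : (a * (p + γ) + b * τ - μ * a) • s
        + (-(a * (d⁻¹ * (s ⬝ᵥ s))) - μ * b) • y = 0 := by
      linear_combination (norm := module) hx
    obtain ⟨hE1, hE2⟩ := hpair _ _ hzero
    have ha0 : a ≠ 0 := by
      intro h
      rw [h] at hE1 hE2
      have hb0 : b = 0 := by
        have h1 : b * τ = 0 := by linear_combination hE1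
        exact (mul_eq_zero.mp h1).resolve_right (ne_of_gt hτ)
      rw [hxab, h, hb0] at hx0
      simp at hx0
    have h3 : a * (μ ^ 2 - (p + γ) * μ + γ) = 0 := by
      linear_combination (-μ) * hE1 - τ * hE2 - a * hg
    have hquadμ : μ ^ 2 - (p + γ) * μ + γ = 0 :=
      (mul_eq_zero.mp h3).resolve_left ha0
    have hkey : (p + γ) ^ 2 - 4 * γ = (p + γ - 2 * μ) ^ 2 := by
      linear_combination -4 * hquadμ
    have h4 : p + γ - 2 * μ ≤ Real.sqrt ((p + γ) ^ 2 - 4 * γ) := by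
      rw [hkey, Real.sqrt_sq_eq_abs]
      exact le_abs_self _
    have : (p + γ - Real.sqrt ((p + γ) ^ 2 - 4 * γ)) / 2 ≤ μ := by linarith
    exact this
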